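/- Let X1,...,Xn be i.i.d. uniform random points in [0,1]^d and let K_{n,d}^{(r)} denote the number of points that dominate exactly r others. Then for n ≥ r+1, E K_{n,d}^{(r)} = n·C(n−1, r) ∫_0^1 x^r (1−x)^{n−1−r} (−log x)^{d−1}/(d−1)! dx. -/

import Mathlib

open MeasureTheory ProbabilityTheory Filter Real Finset
open scoped ENNReal

/-- Uniform distribution on the unit cube `[0,1]^d`. -/
noncomputable def cube (d : ℕ) : Measure (Fin d → ℝ) :=
  Measure.pi fun _ => volume.restrict (Set.Icc 0 1)

/-- Joint law of `n` i.i.d. points uniform in `[0,1]^d`. -/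
noncomputable def sample (n d : ℕ) : Measure (Fin n → Fin d → ℝ) :=
  Measure.pi fun _ => cube d

/-- `x` dominates `y` coordinatewise. -/
def dominates {d : ℕ} (x y : Fin d → ℝ) : Prop := ∀ k, y k ≤ x k

open scoped Classical in
/-- Number of points `X_i` dominates among the others. -/
noncomputable def domCount (n d : ℕ) (ω : Fin n → Fin d → ℝ) (i : Fin n) : ℕ :=
  (Finset.univ.filter fun j => j ≠ i ∧ dominates (ω i) (ω j)).card

open scoped Classical in
/-- Number of non-Pareto points (points dominating at least one other point). -/
noncomputable def nonParetoCount (n d : ℕ) (ω : Fin n → Fin d → ℝ) : ℕ :=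
  (Finset.univ.filter fun i => 1 ≤ domCount n d ω i).card

open scoped Classical in
/-- Number of points dominating exactly `r` other points. -/
noncomputable def layerCount (r n d : ℕ) (ω : Fin n → Fin d → ℝ) : ℕ :=
  (Finset.univ.filter fun i => domCount n d ω i = r).card

instance unif_prob : IsProbabilityMeasure ((volume : Measure ℝ).restrict (Set.Icc 0 1)) := by
  constructor; simp [Real.volume_Icc]

instance cube_prob (d : ℕ) : IsProbabilityMeasure (cube d) := by unfold cube; infer_instance

instance sample_prob (n d : ℕ) : IsProbabilityMeasure (sample n d) := by
  unfold sample; infer_instance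

lemma dset_eq {d : ℕ} (x : Fin d → ℝ) :
    {y : Fin d → ℝ | dominates x y} = Set.pi Set.univ fun k => Set.Iic (x k) := by
  ext y; simp only [Set.mem_setOf_eq, Set.mem_pi, Set.mem_univ, forall_true_left, Set.mem_Iic]
  rfl

lemma measurableSet_dset {d : ℕ} (x : Fin d → ℝ) :
    MeasurableSet {y : Fin d → ℝ | dominates x y} := by
  rw [dset_eq]; exact MeasurableSet.univ_pi fun k => measurableSet_Iic

lemma cube_dset {d : ℕ} (x : Fin d → ℝ) (hx : ∀ k, x k ∈ Set.Icc (0:ℝ) 1) :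
    cube d {y | dominates x y} = ENNReal.ofReal (∏ k, x k) := by
  rw [dset_eq, cube, Measure.pi_pi]
  rw [show ENNReal.ofReal (∏ k, x k) = ∏ k, ENNReal.ofReal (x k) from
    ENNReal.ofReal_prod_of_nonneg (fun k _ => (hx k).1)]
  refine Finset.prod_congr rfl fun k _ => ?_
  rw [Measure.restrict_apply measurableSet_Iic]
  have : Set.Iic (x k) ∩ Set.Icc 0 1 = Set.Icc 0 (x k) := by
    ext t
    constructor
    · rintro ⟨h1, h2, h3⟩; exact ⟨h2, h1⟩
    · rintro ⟨h1, h2⟩; exact ⟨h2, h1, h2.trans (hx k).2⟩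
  rw [this, Real.volume_Icc, sub_zero]

open scoped Classical in
lemma binomial_measure {d : ℕ} (N r : ℕ) (x : Fin d → ℝ) (hx : ∀ k, x k ∈ Set.Icc (0:ℝ) 1) :
    sample N d {η | (Finset.univ.filter fun j => dominates x (η j)).card = r}
      = ENNReal.ofReal ((N.choose r : ℝ) * (∏ k, x k) ^ r * (1 - ∏ k, x k) ^ (N - r)) := by
  set t : ℝ := ∏ k, x k with htdef
  have ht0 : 0 ≤ t := Finset.prod_nonneg fun k _ => (hx k).1
  have ht1 : t ≤ 1 := Finset.prod_le_one (fun k _ => (hx k).1) (fun k _ => (hx k).2)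
  set D : Set (Fin d → ℝ) := {y | dominates x y} with hDdef
  have hD : MeasurableSet D := measurableSet_dset x
  have hq : cube d D = ENNReal.ofReal t := cube_dset x hx
  have hqc : cube d Dᶜ = ENNReal.ofReal (1 - t) := by
    rw [measure_compl hD (measure_ne_top _ _), hq, measure_univ,
      ENNReal.ofReal_sub _ ht0, ENNReal.ofReal_one]
  have hset : {η : Fin N → Fin d → ℝ | (Finset.univ.filter fun j => dominates x (η j)).card = r}
      = ⋃ S ∈ Finset.powersetCard r (Finset.univ : Finset (Fin N)),
          Set.pi Set.univ (fun j => if j ∈ S then D else Dᶜ) := by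
    ext η
    simp only [Set.mem_setOf_eq, Set.mem_iUnion, Set.mem_pi, Set.mem_univ, forall_true_left,
      Finset.mem_powersetCard, exists_prop]
    constructor
    · intro h
      refine ⟨Finset.univ.filter fun j => dominates x (η j), ⟨Finset.subset_univ _, h⟩, fun j => ?_⟩
      by_cases hj : dominates x (η j) <;> simp [hj, hDdef]
    · rintro ⟨S, ⟨-, hcard⟩, hS⟩
      have : Finset.univ.filter (fun j => dominates x (η j)) = S := by
        ext j
        have := hS j
        by_cases hj : j ∈ S <;> simp [hj] at this ⊢ <;> simpa [hDdef] using this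
      rw [this, hcard]
  rw [hset, measure_biUnion_finset ?hdisj ?hmeas]
  case hmeas =>
    intro S _
    exact MeasurableSet.univ_pi fun j => by by_cases hj : j ∈ S <;> simp [hj, hD, hD.compl]
  case hdisj =>
    intro S hS T hT hST
    rw [Finset.mem_coe, Finset.mem_powersetCard] at hS hT
    refine Set.disjoint_left.2 fun η hSη hTη => hST ?_
    rw [Set.mem_pi] at hSη hTη
    ext j
    have h1 := hSη j (Set.mem_univ j)
    have h2 := hTη j (Set.mem_univ j)
    constructor
    · intro hj
      simp only [hj, if_true] at h1
      by_contra hj2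
      simp only [hj2, if_false] at h2
      exact h2 h1
    · intro hj
      simp only [hj, if_true] at h2
      by_contra hj2
      simp only [hj2, if_false] at h1
      exact h1 h2
  have hterm : ∀ S ∈ Finset.powersetCard r (Finset.univ : Finset (Fin N)),
      sample N d (Set.pi Set.univ (fun j => if j ∈ S then D else Dᶜ))
        = ENNReal.ofReal t ^ r * ENNReal.ofReal (1 - t) ^ (N - r) := by
    intro S hS
    rw [Finset.mem_powersetCard] at hS
    rw [sample, Measure.pi_pi]
    rw [← Finset.prod_mul_prod_compl S]
    have e1 : ∀ j ∈ S, cube d (if j ∈ S then D else Dᶜ) = ENNReal.ofReal t := by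
      intro j hj; rw [if_pos hj, hq]
    have e2 : ∀ j ∈ Sᶜ, cube d (if j ∈ S then D else Dᶜ) = ENNReal.ofReal (1 - t) := by
      intro j hj; rw [if_neg (Finset.mem_compl.1 hj), hqc]
    rw [Finset.prod_congr rfl e1, Finset.prod_congr rfl e2, Finset.prod_const,
      Finset.prod_const, hS.2, Finset.card_compl, hS.2, Fintype.card_fin]
  rw [Finset.sum_congr rfl hterm, Finset.sum_const, Finset.card_powersetCard,
    Finset.card_univ, Fintype.card_fin, nsmul_eq_mul]
  rw [ENNReal.ofReal_mul (by positivity), ENNReal.ofReal_mul (by positivity),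
    ENNReal.ofReal_pow ht0, ENNReal.ofReal_pow (by linarith), ENNReal.ofReal_natCast, mul_assoc]

lemma measurableSet_domSet {d : ℕ} :
    MeasurableSet {p : (Fin d → ℝ) × (Fin d → ℝ) | dominates p.1 p.2} := by
  have : {p : (Fin d → ℝ) × (Fin d → ℝ) | dominates p.1 p.2}
      = ⋂ k, {p | p.2 k ≤ p.1 k} := by
    ext p; simp [dominates, Set.mem_iInter]
  rw [this]
  exact MeasurableSet.iInter fun k =>
    measurableSet_le (measurable_snd.eval) (measurable_fst.eval)

open scoped Classical in
lemma measurable_count {d N : ℕ} :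
    Measurable fun q : (Fin d → ℝ) × (Fin N → Fin d → ℝ) =>
      (Finset.univ.filter fun j => dominates q.1 (q.2 j)).card := by
  simp only [Finset.card_filter]
  refine Finset.measurable_sum _ fun j _ => Measurable.ite ?_ measurable_const measurable_const
  exact measurableSet_domSet.preimage (measurable_fst.prodMk (measurable_snd.eval))

open scoped Classical in
lemma domCount_succAbove {n d : ℕ} (ω : Fin (n+1) → Fin d → ℝ) (i : Fin (n+1)) :
    domCount (n+1) d ω i
      = (Finset.univ.filter fun j : Fin n => dominates (ω i) (ω (i.succAbove j))).card := by
  rw [domCount, show (Finset.univ.filter fun j => j ≠ i ∧ dominates (ω i) (ω j))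
      = Finset.image i.succAbove
          (Finset.univ.filter fun j : Fin n => dominates (ω i) (ω (i.succAbove j))) from ?_,
    Finset.card_image_of_injective _ (Fin.succAbove_right_injective)]
  ext j
  simp only [Finset.mem_filter, Finset.mem_univ, true_and, Finset.mem_image]
  constructor
  · rintro ⟨hne, hdom⟩
    obtain ⟨k, rfl⟩ := Fin.exists_succAbove_eq hne
    exact ⟨k, hdom, rfl⟩
  · rintro ⟨k, hdom, rfl⟩
    exact ⟨Fin.succAbove_ne i k, hdom⟩

lemma cube_ae_box (d : ℕ) : ∀ᵐ x ∂cube d, ∀ k, x k ∈ Set.Icc (0:ℝ) 1 := by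
  have h : cube d (Set.pi Set.univ fun _ => Set.Icc (0:ℝ) 1) = 1 := by
    rw [cube, Measure.pi_pi]
    simp [Measure.restrict_apply_self, Real.volume_Icc]
  have h2 : cube d (Set.pi Set.univ fun _ => Set.Icc (0:ℝ) 1)ᶜ = 0 := by
    rw [measure_compl (MeasurableSet.univ_pi fun _ => measurableSet_Icc) (measure_ne_top _ _), h,
      measure_univ, tsub_self]
  rw [MeasureTheory.ae_iff]
  refine measure_mono_null ?_ h2
  intro x hx
  simp only [Set.mem_compl_iff, Set.mem_pi, Set.mem_univ, forall_true_left]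
  exact fun hcon => hx fun k => hcon k

lemma g_continuous (d N r : ℕ) :
    Continuous fun x : Fin d → ℝ =>
      (N.choose r : ℝ) * (∏ k, x k) ^ r * (1 - ∏ k, x k) ^ (N - r) := by
  have hp : Continuous fun x : Fin d → ℝ => ∏ k, x k :=
    continuous_finset_prod _ fun k _ => continuous_apply k
  fun_prop

lemma cube_eq (d : ℕ) :
    cube d = (volume : Measure (Fin d → ℝ)).restrict (Set.pi Set.univ fun _ => Set.Icc 0 1) := by
  unfold cube
  refine Measure.pi_eq fun s hs => ?_
  rw [Measure.restrict_apply (MeasurableSet.univ_pi hs), ← Set.pi_inter_distrib, volume_pi,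
    Measure.pi_pi]
  exact Finset.prod_congr rfl fun k _ => (Measure.restrict_apply (hs k)).symm

lemma g_integrable (d N r : ℕ) :
    Integrable (fun x : Fin d → ℝ =>
      (N.choose r : ℝ) * (∏ k, x k) ^ r * (1 - ∏ k, x k) ^ (N - r)) (cube d) := by
  rw [cube_eq]
  exact ((g_continuous d N r).continuousOn).integrableOn_compact
    (isCompact_univ_pi fun _ => isCompact_Icc)

open scoped Classical in
lemma measure_domCount {n d : ℕ} (r : ℕ) (i : Fin (n+1)) :
    sample (n+1) d {ω | domCount (n+1) d ω i = r}
      = ENNReal.ofReal (∫ x, (n.choose r : ℝ) * (∏ k, x k) ^ r * (1 - ∏ k, x k) ^ (n - r)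
          ∂cube d) := by
  set S : Set ((Fin d → ℝ) × (Fin n → Fin d → ℝ)) :=
    {q | (Finset.univ.filter fun j => dominates q.1 (q.2 j)).card = r} with hSdef
  have hSm : MeasurableSet S := measurable_count (measurableSet_singleton r)
  have hpre : {ω : Fin (n+1) → Fin d → ℝ | domCount (n+1) d ω i = r}
      = (MeasurableEquiv.piFinSuccAbove (fun _ => Fin d → ℝ) i) ⁻¹' S := by
    ext ω
    simp only [Set.mem_setOf_eq, Set.mem_preimage]
    rw [domCount_succAbove]
    rfl
  have hmp := measurePreserving_piFinSuccAbove (fun _ : Fin (n+1) => cube d) i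
  rw [show sample (n+1) d = Measure.pi (fun _ : Fin (n+1) => cube d) from rfl, hpre,
    hmp.measure_preimage hSm.nullMeasurableSet, Measure.prod_apply hSm]
  have hae : ∀ᵐ x ∂cube d, Measure.pi (fun _ : Fin n => cube d) (Prod.mk x ⁻¹' S)
      = ENNReal.ofReal ((n.choose r : ℝ) * (∏ k, x k) ^ r * (1 - ∏ k, x k) ^ (n - r)) := by
    filter_upwards [cube_ae_box d] with x hx
    exact binomial_measure n r x hx
  rw [lintegral_congr_ae hae, ← ofReal_integral_eq_lintegral_ofReal (g_integrable d n r) ?_]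
  filter_upwards [cube_ae_box d] with x hx
  have h0 : 0 ≤ ∏ k, x k := Finset.prod_nonneg fun k _ => (hx k).1
  have h1 : (∏ k, x k) ≤ 1 := Finset.prod_le_one (fun k _ => (hx k).1) fun k _ => (hx k).2
  have : (0:ℝ) ≤ 1 - ∏ k, x k := by linarith
  positivity

lemma cube_moment (d s : ℕ) :
    ∫ x, (∏ k, x k) ^ s ∂cube d = (1 / (s + 1 : ℝ)) ^ d := by
  have h1 : ∫ x, (∏ k, x k) ^ s ∂cube d
      = ∫ x : Fin d → ℝ, ∏ k, (Set.Icc (0:ℝ) 1).indicator (fun y => y ^ s) (x k) := by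
    rw [cube_eq, ← integral_indicator (MeasurableSet.univ_pi fun _ => measurableSet_Icc)]
    congr 1 with x
    by_cases hx : x ∈ Set.pi Set.univ fun _ => Set.Icc (0:ℝ) 1
    · rw [Set.indicator_of_mem hx, ← Finset.prod_pow]
      exact Finset.prod_congr rfl fun k _ =>
        (Set.indicator_of_mem (hx k (Set.mem_univ k)) _).symm
    · rw [Set.indicator_of_notMem hx]
      rw [Set.mem_pi] at hx
      push_neg at hx
      obtain ⟨k, -, hk⟩ := hx
      exact (Finset.prod_eq_zero (Finset.mem_univ k) (Set.indicator_of_notMem hk _)).symm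
  rw [h1, volume_pi, MeasureTheory.integral_fintype_prod_eq_pow (ι := Fin d)
    ((Set.Icc (0:ℝ) 1).indicator (fun y => y ^ s))]
  congr 1
  rw [integral_indicator measurableSet_Icc, integral_Icc_eq_integral_Ioc,
    ← intervalIntegral.integral_of_le zero_le_one, integral_pow]
  norm_num
  rw [Fintype.card_fin]

lemma mono_integrable (d s : ℕ) :
    Integrable (fun x : Fin d → ℝ => (∏ k, x k) ^ s) (cube d) := by
  rw [cube_eq]
  have hp : Continuous fun x : Fin d → ℝ => (∏ k, x k) ^ s :=
    (continuous_finset_prod _ fun k _ => continuous_apply k).pow s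
  exact hp.continuousOn.integrableOn_compact (isCompact_univ_pi fun _ => isCompact_Icc)

lemma exp_neg_image : (fun t : ℝ => Real.exp (-t)) '' Set.Ioi 0 = Set.Ioo 0 1 := by
  ext y
  constructor
  · rintro ⟨t, ht, rfl⟩
    exact ⟨Real.exp_pos _, Real.exp_lt_one_iff.2 (by simpa using ht)⟩
  · rintro ⟨h0, h1⟩
    exact ⟨-Real.log y, by simpa using Real.log_neg h0 h1, by simp [Real.exp_log h0]⟩

lemma exp_neg_deriv : ∀ t ∈ Set.Ioi (0:ℝ),
    HasDerivWithinAt (fun t : ℝ => Real.exp (-t)) (-Real.exp (-t)) (Set.Ioi 0) t := by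
  intro t _
  have h := (Real.hasDerivAt_exp (-t)).comp t (hasDerivAt_neg t)
  simpa [mul_comm, Function.comp_def] using h.hasDerivWithinAt

lemma exp_neg_injOn : Set.InjOn (fun t : ℝ => Real.exp (-t)) (Set.Ioi 0) :=
  fun a _ b _ hab => by
    have := Real.exp_injective hab; linarith [this]

lemma gamma_type (d s : ℕ) (hd : 1 ≤ d) :
    ∫ t in Set.Ioi (0:ℝ), t ^ (d - 1) * Real.exp (-((s + 1 : ℝ) * t))
      = (d - 1).factorial / (s + 1 : ℝ) ^ d := by
  have hcast : ((d - 1 : ℕ) : ℝ) = (d : ℝ) - 1 := by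
    rw [Nat.cast_sub hd, Nat.cast_one]
  have h := integral_rpow_mul_exp_neg_mul_Ioi (a := (d : ℝ)) (r := (s + 1 : ℝ))
    (by exact_mod_cast Nat.pos_of_ne_zero (by omega)) (by positivity)
  rw [setIntegral_congr_fun measurableSet_Ioi
    (g := fun t : ℝ => t ^ ((d : ℝ) - 1) * Real.exp (-((s + 1 : ℝ) * t)))
    (fun t ht => by simp only [← hcast, Real.rpow_natCast]), h]
  have hGamma : Real.Gamma (d : ℝ) = (d - 1).factorial := by
    have := Real.Gamma_nat_eq_factorial (d - 1)
    rwa [hcast, sub_add_cancel] at this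
  rw [hGamma, Real.rpow_natCast]
  field_simp
  rw [← mul_pow, one_div, inv_mul_cancel₀ (by positivity), one_pow]

lemma log_integrand_eq (d s : ℕ) : ∀ t ∈ Set.Ioi (0:ℝ),
    |(-Real.exp (-t))| • ((fun x : ℝ => x ^ s * (-Real.log x) ^ (d - 1)) (Real.exp (-t)))
      = t ^ (d - 1) * Real.exp (-((s + 1 : ℝ) * t)) := by
  intro t _
  simp only [abs_neg, abs_of_pos (Real.exp_pos _), smul_eq_mul, Real.log_exp, neg_neg]
  rw [← Real.exp_nat_mul]
  rw [show Real.exp (-t) * (Real.exp (↑s * -t) * t ^ (d-1))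
      = t ^ (d-1) * (Real.exp (↑s * -t) * Real.exp (-t)) by ring, ← Real.exp_add]
  ring_nf

lemma log_moment (d s : ℕ) (hd : 1 ≤ d) :
    ∫ x in Set.Ioc (0:ℝ) 1, x ^ s * (-Real.log x) ^ (d - 1)
      = (d - 1).factorial / (s + 1 : ℝ) ^ d := by
  rw [integral_Ioc_eq_integral_Ioo, ← exp_neg_image,
    integral_image_eq_integral_abs_deriv_smul measurableSet_Ioi exp_neg_deriv exp_neg_injOn,
    setIntegral_congr_fun measurableSet_Ioi (log_integrand_eq d s)]
  exact gamma_type d s hd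

lemma log_integrable (d s : ℕ) :
    IntegrableOn (fun x : ℝ => x ^ s * (-Real.log x) ^ (d - 1)) (Set.Ioc 0 1) := by
  rw [integrableOn_Ioc_iff_integrableOn_Ioo, ← exp_neg_image,
    integrableOn_image_iff_integrableOn_abs_deriv_smul measurableSet_Ioi exp_neg_deriv
      exp_neg_injOn]
  have h := integrableOn_rpow_mul_exp_neg_mul_rpow (s := ((d - 1 : ℕ) : ℝ)) (p := 1)
    (b := (s : ℝ) + 1) (lt_of_lt_of_le (by norm_num) (Nat.cast_nonneg _)) zero_lt_one (by positivity)
  refine (h.congr_fun (fun t ht => ?_) measurableSet_Ioi).congr_fun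
    (fun t ht => (log_integrand_eq d s t ht).symm) measurableSet_Ioi
  rw [Real.rpow_one, Real.rpow_natCast, neg_mul]

lemma key_identity (d N r : ℕ) (hd : 1 ≤ d) :
    ∫ x, (∏ k, x k) ^ r * (1 - ∏ k, x k) ^ (N - r) ∂cube d
      = ∫ x in Set.Ioc (0:ℝ) 1,
          x ^ r * (1 - x) ^ (N - r) * (-Real.log x) ^ (d - 1) / (d - 1).factorial := by
  set q := N - r with hq
  have hD : (((d-1).factorial : ℝ)) ≠ 0 := Nat.cast_ne_zero.2 (Nat.factorial_ne_zero _)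
  have hexp : ∀ t : ℝ, t ^ r * (1 - t) ^ q
      = ∑ j ∈ Finset.range (q+1), (q.choose j : ℝ) * (-1) ^ j * t ^ (r + j) := by
    intro t
    rw [sub_eq_add_neg, add_comm, add_pow, Finset.mul_sum]
    refine Finset.sum_congr rfl fun j hj => ?_
    rw [one_pow, neg_pow, pow_add]
    ring
  have hL : ∫ x, (∏ k, x k) ^ r * (1 - ∏ k, x k) ^ q ∂cube d
      = ∑ j ∈ Finset.range (q+1), (q.choose j : ℝ) * (-1) ^ j * (1 / ((r:ℝ) + j + 1)) ^ d := by
    rw [show (fun x : Fin d → ℝ => (∏ k, x k) ^ r * (1 - ∏ k, x k) ^ q)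
        = fun x => ∑ j ∈ Finset.range (q+1), (q.choose j : ℝ) * (-1) ^ j * (∏ k, x k) ^ (r + j)
        from funext fun x => hexp _]
    rw [integral_finset_sum _ fun j _ => ((mono_integrable d (r+j)).const_mul _)]
    refine Finset.sum_congr rfl fun j hj => ?_
    rw [integral_const_mul, cube_moment]
    norm_num
  have hR : ∫ x in Set.Ioc (0:ℝ) 1,
        x ^ r * (1 - x) ^ q * (-Real.log x) ^ (d - 1) / (d - 1).factorial
      = ∑ j ∈ Finset.range (q+1), (q.choose j : ℝ) * (-1) ^ j * (1 / ((r:ℝ) + j + 1)) ^ d := by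
    have hfun : (fun x : ℝ => x ^ r * (1 - x) ^ q * (-Real.log x) ^ (d - 1) / (d - 1).factorial)
        = fun x => ∑ j ∈ Finset.range (q+1),
            ((q.choose j : ℝ) * (-1) ^ j / (d - 1).factorial)
              * (x ^ (r + j) * (-Real.log x) ^ (d - 1)) := by
      funext x
      rw [show x ^ r * (1 - x) ^ q * (-Real.log x) ^ (d - 1) / (d - 1).factorial
          = (x ^ r * (1 - x) ^ q) * ((-Real.log x) ^ (d - 1) / (d - 1).factorial) by ring,
        hexp x, Finset.sum_mul]
      refine Finset.sum_congr rfl fun j hj => ?_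
      ring
    rw [hfun, integral_finset_sum _ fun j _ => ((log_integrable d (r+j)).const_mul _)]
    refine Finset.sum_congr rfl fun j hj => ?_
    rw [integral_const_mul, log_moment d (r+j) hd]
    have hpos : ((r:ℝ) + (j:ℝ) + 1) ≠ 0 := by positivity
    push_cast
    rw [div_pow, one_pow]
    field_simp
  rw [hL, hR]

open scoped Classical in
lemma measurableSet_event {n d : ℕ} (r : ℕ) (i : Fin (n+1)) :
    MeasurableSet {ω : Fin (n+1) → Fin d → ℝ | domCount (n+1) d ω i = r} := by
  have hpre : {ω : Fin (n+1) → Fin d → ℝ | domCount (n+1) d ω i = r}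
      = (MeasurableEquiv.piFinSuccAbove (fun _ => Fin d → ℝ) i) ⁻¹'
          {q : (Fin d → ℝ) × (Fin n → Fin d → ℝ) |
            (Finset.univ.filter fun j => dominates q.1 (q.2 j)).card = r} := by
    ext ω
    simp only [Set.mem_setOf_eq, Set.mem_preimage]
    rw [domCount_succAbove]
    rfl
  rw [hpre]
  exact (measurable_count (measurableSet_singleton r)).preimage
    (MeasurableEquiv.piFinSuccAbove _ i).measurable

theorem expected_layer_count (n d r : ℕ) (hn : r + 1 ≤ n) (hd : 1 ≤ d) :
    (∫ ω, (layerCount r n d ω : ℝ) ∂ sample n d)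
      = (n : ℝ) * ((n - 1).choose r) *
        ∫ x in Set.Ioc (0 : ℝ) 1,
          x ^ r * (1 - x) ^ (n - 1 - r) * (-Real.log x) ^ (d - 1) / (d - 1).factorial := by
  classical
  obtain ⟨N, rfl⟩ : ∃ N, n = N + 1 := ⟨n - 1, by omega⟩
  simp only [Nat.add_sub_cancel]
  have hnn : 0 ≤ ∫ x, (N.choose r : ℝ) * (∏ k, x k) ^ r * (1 - ∏ k, x k) ^ (N - r) ∂cube d := by
    refine integral_nonneg_of_ae ?_
    filter_upwards [cube_ae_box d] with x hx
    have h0 : 0 ≤ ∏ k, x k := Finset.prod_nonneg fun k _ => (hx k).1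
    have h1 : (∏ k, x k) ≤ 1 := Finset.prod_le_one (fun k _ => (hx k).1) fun k _ => (hx k).2
    have h2 : (0:ℝ) ≤ 1 - ∏ k, x k := by linarith
    positivity
  have hexp : ∀ ω : Fin (N+1) → Fin d → ℝ, ((layerCount r (N+1) d ω : ℝ))
      = ∑ i : Fin (N+1), ({ω' : Fin (N+1) → Fin d → ℝ | domCount (N+1) d ω' i = r}.indicator
          (fun _ => (1:ℝ)) ω) := by
    intro ω
    rw [layerCount, Finset.card_filter]
    push_cast
    refine Finset.sum_congr rfl fun i _ => ?_
    by_cases h : domCount (N+1) d ω i = r <;> simp [Set.indicator_apply, h]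
  calc ∫ ω, (layerCount r (N+1) d ω : ℝ) ∂sample (N+1) d
      = ∑ i : Fin (N+1), ∫ ω, ({ω' : Fin (N+1) → Fin d → ℝ | domCount (N+1) d ω' i = r}.indicator
          (fun _ => (1:ℝ)) ω) ∂sample (N+1) d := by
        rw [integral_congr_ae (Filter.Eventually.of_forall hexp)]
        exact integral_finset_sum _ fun i _ =>
          (integrable_const (1:ℝ)).indicator (measurableSet_event r i)
    _ = ∑ i : Fin (N+1), (sample (N+1) d {ω' | domCount (N+1) d ω' i = r}).toReal := by
        refine Finset.sum_congr rfl fun i _ => ?_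
        rw [integral_indicator_const _ (measurableSet_event r i), smul_eq_mul, mul_one, measureReal_def]
    _ = ∑ i : Fin (N+1), ∫ x, (N.choose r : ℝ) * (∏ k, x k) ^ r * (1 - ∏ k, x k) ^ (N - r)
          ∂cube d := by
        refine Finset.sum_congr rfl fun i _ => ?_
        rw [measure_domCount r i, ENNReal.toReal_ofReal hnn]
    _ = ((N:ℝ)+1) * ((N.choose r : ℝ) * ∫ x, (∏ k, x k) ^ r * (1 - ∏ k, x k) ^ (N - r) ∂cube d) := by
        rw [Finset.sum_const, Finset.card_univ, Fintype.card_fin, nsmul_eq_mul]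
        rw [show (fun x : Fin d → ℝ => (N.choose r : ℝ) * (∏ k, x k) ^ r * (1 - ∏ k, x k) ^ (N - r))
            = fun x => (N.choose r : ℝ) * ((∏ k, x k) ^ r * (1 - ∏ k, x k) ^ (N - r))
            from funext fun x => by ring, integral_const_mul]
        push_cast
        ring
    _ = ((N:ℝ)+1) * (N.choose r : ℝ) * ∫ x in Set.Ioc (0 : ℝ) 1,
          x ^ r * (1 - x) ^ (N - r) * (-Real.log x) ^ (d - 1) / (d - 1).factorial := by
        rw [key_identity d N r hd]
        ring
  push_cast
  ring
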